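/- Let K ≥ 1, let S^1, …, S^K be nonempty finite strategy sets, let M^k : ∏_j S^j → ℝ be payoff functions, and let φ be a flow on the product of probability simplices X = ∏_k Δ(S^k) such that for every x ∈ X the trajectory t ↦ φ(t,x) is differentiable and satisfies the K-population replicator equations. If a sink chain component of φ contains a pure strategy profile s_i (viewed as a vertex of X), then it contains every pure strategy profile s_j reachable from s_i by a directed path in the response graph of the game; in particular, it contains all the pure strategy profiles of at least one Markov-Conley chain (sink strongly connected component of the response graph). -/

import Mathlib

/-- A flow on a metric space `X`: a continuous map `φ : ℝ × X → X` with
`φ 0 x = x` and `φ (s+t) x = φ s (φ t x)` (hence each `φ t` is a homeomorphism,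
with inverse `φ (−t)`). -/
structure IsFlow {X : Type*} [MetricSpace X] (φ : ℝ → X → X) : Prop where
  continuous : Continuous fun p : ℝ × X => φ p.1 p.2
  map_zero : ∀ x, φ 0 x = x
  map_add : ∀ s t x, φ (s + t) x = φ s (φ t x)

/-- An `(ε,T)`-chain from `x` to `y` with respect to a flow `φ`: a finite sequence
`x = x₀, x₁, …, xₙ = y` (`n ≥ 1`) and times `t₀, …, t_{n−1} ∈ [T,∞)` with
`dist (φ tᵢ xᵢ) x_{i+1} < ε` for all `i < n`. -/
def IsEpsTChain {X : Type*} [MetricSpace X] (φ : ℝ → X → X) (ε T : ℝ) (x y : X) : Prop :=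
  ∃ (n : ℕ) (xs : ℕ → X) (ts : ℕ → ℝ),
    1 ≤ n ∧ xs 0 = x ∧ xs n = y ∧ (∀ i < n, T ≤ ts i) ∧
    ∀ i < n, dist (φ (ts i) (xs i)) (xs (i + 1)) < ε

/-- The forward chain limit set `Ω⁺(φ, x)`: the set of points `y` such that for every
`ε > 0` and `T > 0` there is an `(ε,T)`-chain from `x` to `y`. -/
def forwardChainLimit {X : Type*} [MetricSpace X] (φ : ℝ → X → X) (x : X) : Set X :=
  {y | ∀ ε > (0 : ℝ), ∀ T > (0 : ℝ), IsEpsTChain φ ε T x y}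

/-- Two points are chain equivalent if each lies in the forward chain limit set of
the other. -/
def ChainEquiv {X : Type*} [MetricSpace X] (φ : ℝ → X → X) (x y : X) : Prop :=
  y ∈ forwardChainLimit φ x ∧ x ∈ forwardChainLimit φ y

/-- The chain recurrent set `R(φ)`: points chain equivalent to themselves. -/
def chainRecurrentSet {X : Type*} [MetricSpace X] (φ : ℝ → X → X) : Set X :=
  {x | ChainEquiv φ x x}

/-- The chain components of `φ`: the equivalence classes of the chain equivalence
relation on the chain recurrent set `R(φ)`. -/
def IsChainComponent {X : Type*} [MetricSpace X] (φ : ℝ → X → X) (A : Set X) : Prop :=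
  ∃ x ∈ chainRecurrentSet φ, A = {y ∈ chainRecurrentSet φ | ChainEquiv φ x y}

/-- The reachability relation on chain components: `A₁ ≤_C A₂` iff there exist
`x ∈ A₂` and `y ∈ A₁` with `y ∈ Ω⁺(φ, x)`. -/
def ccLE {X : Type*} [MetricSpace X] (φ : ℝ → X → X) (A₁ A₂ : Set X) : Prop :=
  ∃ x ∈ A₂, ∃ y ∈ A₁, y ∈ forwardChainLimit φ x

/-- Fitness of pure strategy `i ∈ S^k` at mixed state `x`:
`f^k_i(x) = Σ_{s^{−k}} M^k(i, s^{−k}) · ∏_{c ≠ k} x^c_{s^c}`, encoded as a sum over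
full profiles whose `k`-th coordinate is `i`. -/
def fitness {K : ℕ} {S : Fin K → Type} [∀ k, Fintype (S k)] [∀ k, DecidableEq (S k)]
    (M : ∀ k : Fin K, (∀ j, S j) → ℝ) (k : Fin K) (i : S k) (x : ∀ k, S k → ℝ) : ℝ :=
  ∑ s' : ∀ j, S j,
    if s' k = i then M k s' * ∏ c ∈ Finset.univ.erase k, x c (s' c) else 0

/-- The response graph of the game: a directed edge from `s` to `t` whenever `t`
differs from `s` in the strategy of exactly one player `k` and is a weakly better
response for that player. -/
def RespEdge {K : ℕ} {S : Fin K → Type}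
    (M : ∀ k : Fin K, (∀ j, S j) → ℝ) (s t : ∀ j, S j) : Prop :=
  ∃ k : Fin K, s k ≠ t k ∧ (∀ l, l ≠ k → s l = t l) ∧ M k s ≤ M k t

/-- A strongly connected component of the response graph: the set of all vertices
mutually reachable (by directed paths) from some vertex `s`. -/
def IsSCC {K : ℕ} {S : Fin K → Type}
    (M : ∀ k : Fin K, (∀ j, S j) → ℝ) (A : Set (∀ j, S j)) : Prop :=
  ∃ s : ∀ j, S j, A = {t | Relation.ReflTransGen (RespEdge M) s t ∧
    Relation.ReflTransGen (RespEdge M) t s}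

/-- A sink strongly connected component of the response graph: a strongly connected
component with no out-going edges. -/
def IsSinkSCC {K : ℕ} {S : Fin K → Type}
    (M : ∀ k : Fin K, (∀ j, S j) → ℝ) (A : Set (∀ j, S j)) : Prop :=
  IsSCC M A ∧ ∀ s ∈ A, ∀ t : ∀ j, S j, RespEdge M s t → t ∈ A

/-- The product of probability simplices `X = ∏_k Δ(S^k)`: mixed strategy profiles
of the K populations. -/
abbrev SimplexProd {K : ℕ} (S : Fin K → Type) [∀ k, Fintype (S k)] : Type :=
  {x : ∀ k, S k → ℝ // (∀ k i, 0 ≤ x k i) ∧ ∀ k, ∑ i, x k i = 1}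

/-- The vertex of `∏_k Δ(S^k)` corresponding to a pure strategy profile `s`,
assigning probability 1 to `s^k` in each population `k`. -/
def vertex {K : ℕ} (S : Fin K → Type) [∀ k, Fintype (S k)] [∀ k, DecidableEq (S k)]
    (s : ∀ k, S k) : SimplexProd S :=
  ⟨fun c j => if j = s c then 1 else 0,
    fun k i => by dsimp only; split <;> norm_num,
    fun k => by simp⟩

/-- A sink chain component: a chain component `A` such that no other chain component
`B ≠ A` satisfies `B ≤_C A`. -/
def IsSinkChainComponent {X : Type*} [MetricSpace X] (φ : ℝ → X → X) (A : Set X) : Prop :=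
  IsChainComponent φ A ∧ ∀ B : Set X, IsChainComponent φ B → B ≠ A → ¬ ccLE φ B A

section ChainLemmas
variable {X : Type*} [MetricSpace X] (φ : ℝ → X → X)

lemma chain_step {ε T t : ℝ} {x y : X} (ht : T ≤ t) (hd : dist (φ t x) y < ε) :
    IsEpsTChain φ ε T x y := by
  refine ⟨1, fun i => if i = 0 then x else y, fun _ => t, le_refl 1, by simp, by simp, ?_, ?_⟩
  · intro i _; exact ht
  · intro i hi
    interval_cases i
    simpa using hd

lemma chain_cons {ε T t : ℝ} {x y z : X} (ht : T ≤ t) (hd : dist (φ t x) z < ε)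
    (hc : IsEpsTChain φ ε T z y) : IsEpsTChain φ ε T x y := by
  obtain ⟨n, xs, ts, hn, h0, hN, hts, hdist⟩ := hc
  refine ⟨n + 1, fun i => if i = 0 then x else xs (i - 1), fun i => if i = 0 then t else ts (i - 1),
    by omega, by simp, by simp [Nat.succ_ne_zero, hN], ?_, ?_⟩
  · intro i hi
    rcases Nat.eq_zero_or_pos i with h | h
    · simp [h, ht]
    · simp only [Nat.pos_iff_ne_zero.mp h, if_neg (Nat.pos_iff_ne_zero.mp h)]
      exact hts _ (by omega)
  · intro i hi
    rcases Nat.eq_zero_or_pos i with h | h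
    · subst h; simpa [h0] using hd
    · have h' : i ≠ 0 := Nat.pos_iff_ne_zero.mp h
      simp only [if_neg h', if_neg (by omega : i + 1 ≠ 0)]
      have : i + 1 - 1 = i - 1 + 1 := by omega
      rw [this]
      exact hdist _ (by omega)

lemma chain_trans {ε T : ℝ} {x y z : X} (h1 : IsEpsTChain φ ε T x y)
    (h2 : IsEpsTChain φ ε T y z) : IsEpsTChain φ ε T x z := by
  obtain ⟨n, xs, ts, hn, h0, hN, hts, hdist⟩ := h1
  obtain ⟨m, ys, us, hm, g0, gM, gus, gdist⟩ := h2
  have key : ∀ i, n ≤ i → (if i ≤ n then xs i else ys (i - n)) = ys (i - n) := by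
    intro i hi
    by_cases h : i ≤ n
    · have hin : i = n := le_antisymm h hi
      simp [hin, hN, g0.symm]
    · simp [h]
  refine ⟨n + m, fun i => if i ≤ n then xs i else ys (i - n),
    fun i => if i < n then ts i else us (i - n), by omega, by simp [h0], ?_, ?_, ?_⟩
  · show (if n + m ≤ n then xs (n + m) else ys (n + m - n)) = z
    rw [key (n + m) (by omega)]
    simpa [Nat.add_sub_cancel_left] using gM
  · intro i hi
    by_cases h : i < n
    · simpa [h] using hts i h
    · have h2 : i - n < m := by omega
      simpa [h] using gus (i - n) h2
  · intro i hi
    by_cases h : i < n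
    · simpa [le_of_lt h, Nat.succ_le_of_lt h, h] using hdist i h
    · have e1 := key i (by omega)
      have e2 := key (i + 1) (by omega : n ≤ i + 1)
      simp only [e1, e2, if_neg h]
      have e3 : i + 1 - n = i - n + 1 := by omega
      rw [e3]
      exact gdist (i - n) (by omega)

lemma fcl_trans {x y z : X} (h1 : y ∈ forwardChainLimit φ x) (h2 : z ∈ forwardChainLimit φ y) :
    z ∈ forwardChainLimit φ x := by
  intro ε hε T hT
  exact chain_trans φ (h1 ε hε T hT) (h2 ε hε T hT)

end ChainLemmas
section GraphLemmas
open Relation Classical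

lemma exists_sink_scc {K : ℕ} {S : Fin K → Type} [∀ k, Fintype (S k)]
    (M : ∀ k : Fin K, (∀ j, S j) → ℝ) (si : ∀ j, S j) :
    ∃ t0 : ∀ j, S j, ReflTransGen (RespEdge M) si t0 ∧
      IsSinkSCC M {u | ReflTransGen (RespEdge M) t0 u ∧ ReflTransGen (RespEdge M) u t0} ∧
      ∀ u, ReflTransGen (RespEdge M) t0 u → ReflTransGen (RespEdge M) u t0 := by
  classical
  haveI : Fintype (∀ j, S j) := inferInstance
  set R := fun a b => ReflTransGen (RespEdge M) a b with hR
  set F : (∀ j, S j) → Finset (∀ j, S j) := fun a => Finset.univ.filter (fun u => R a u) with hF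
  have hmem : ∀ a u, u ∈ F a ↔ R a u := by intro a u; simp [hF]
  obtain ⟨t0, ht0mem, ht0min⟩ := Finset.exists_min_image
    (Finset.univ.filter (fun u => R si u)) (fun u => (F u).card)
    ⟨si, Finset.mem_filter.mpr ⟨Finset.mem_univ si, ReflTransGen.refl⟩⟩
  have hsit0 : R si t0 := (Finset.mem_filter.mp ht0mem).2
  have hmax : ∀ u, R t0 u → R u t0 := by
    intro u htu
    by_contra hut
    have hsub : F u ⊆ F t0 := by
      intro v hv
      rw [hmem] at hv ⊢
      exact htu.trans hv
    have hss : F u ⊂ F t0 := by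
      refine ⟨hsub, fun hba => ?_⟩
      have h1 : t0 ∈ F u := hba ((hmem t0 t0).mpr ReflTransGen.refl)
      exact hut ((hmem u t0).mp h1)
    have hcard : (F u).card < (F t0).card := Finset.card_lt_card hss
    have humem : u ∈ Finset.univ.filter (fun v => R si v) :=
      Finset.mem_filter.mpr ⟨Finset.mem_univ u, hsit0.trans htu⟩
    exact absurd (ht0min u humem) (not_le.mpr hcard)
  refine ⟨t0, hsit0, ⟨⟨t0, rfl⟩, ?_⟩, hmax⟩
  rintro s ⟨hts, hst⟩ u hsu
  have htu : R t0 u := hts.trans (ReflTransGen.single hsu)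
  exact ⟨htu, hmax u htu⟩

end GraphLemmas
section Analytic
variable {K : ℕ} {S : Fin K → Type} [∀ k, Fintype (S k)] [∀ k, DecidableEq (S k)]

lemma coord_le_one (z : SimplexProd S) (k : Fin K) (i : S k) : z.1 k i ≤ 1 := by
  have h := z.2.2 k
  calc z.1 k i ≤ ∑ j, z.1 k j :=
        Finset.single_le_sum (fun j _ => z.2.1 k j) (Finset.mem_univ i)
    _ = 1 := h

lemma fitness_abs_le (M : ∀ k : Fin K, (∀ j, S j) → ℝ) (k : Fin K) (i : S k)
    (z : SimplexProd S) : |fitness M k i z.1| ≤ ∑ s' : ∀ j, S j, |M k s'| := by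
  unfold fitness
  refine (Finset.abs_sum_le_sum_abs _ _).trans (Finset.sum_le_sum fun s' _ => ?_)
  by_cases h : s' k = i
  · rw [if_pos h, abs_mul]
    have hp0 : 0 ≤ ∏ c ∈ Finset.univ.erase k, z.1 c (s' c) :=
      Finset.prod_nonneg fun c _ => z.2.1 c (s' c)
    have hp1 : ∏ c ∈ Finset.univ.erase k, z.1 c (s' c) ≤ 1 :=
      Finset.prod_le_one (fun c _ => z.2.1 c (s' c)) (fun c _ => coord_le_one z c (s' c))
    calc |M k s'| * |∏ c ∈ Finset.univ.erase k, z.1 c (s' c)|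
        ≤ |M k s'| * 1 := by
          refine mul_le_mul_of_nonneg_left ?_ (abs_nonneg _)
          rw [abs_of_nonneg hp0]; exact hp1
      _ = |M k s'| := mul_one _
  · rw [if_neg h]
    simpa using abs_nonneg (M k s')

lemma growth_abs_le (M : ∀ k : Fin K, (∀ j, S j) → ℝ) (k : Fin K) (i : S k)
    (z : SimplexProd S) :
    |fitness M k i z.1 - ∑ j : S k, z.1 k j * fitness M k j z.1|
      ≤ 2 * ∑ s' : ∀ j, S j, |M k s'| := by
  set C := ∑ s' : ∀ j, S j, |M k s'| with hC
  have hC0 : 0 ≤ C := Finset.sum_nonneg fun _ _ => abs_nonneg _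
  have h1 : |fitness M k i z.1| ≤ C := fitness_abs_le M k i z
  have h2 : |∑ j : S k, z.1 k j * fitness M k j z.1| ≤ C := by
    refine (Finset.abs_sum_le_sum_abs _ _).trans ?_
    calc ∑ j : S k, |z.1 k j * fitness M k j z.1|
        ≤ ∑ j : S k, z.1 k j * C := by
          refine Finset.sum_le_sum fun j _ => ?_
          rw [abs_mul, abs_of_nonneg (z.2.1 k j)]
          exact mul_le_mul_of_nonneg_left (fitness_abs_le M k j z) (z.2.1 k j)
      _ = (∑ j : S k, z.1 k j) * C := by rw [Finset.sum_mul]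
      _ = C := by rw [z.2.2 k, one_mul]
  calc |fitness M k i z.1 - ∑ j : S k, z.1 k j * fitness M k j z.1|
      ≤ |fitness M k i z.1| + |∑ j : S k, z.1 k j * fitness M k j z.1| := abs_sub _ _
    _ ≤ C + C := add_le_add h1 h2
    _ = 2 * C := by ring

end Analytic
section Flow
variable {K : ℕ} {S : Fin K → Type} [∀ k, Fintype (S k)] [∀ k, DecidableEq (S k)]
  (M : ∀ k : Fin K, (∀ j, S j) → ℝ)
  (φ : ℝ → SimplexProd S → SimplexProd S) (hφ : IsFlow φ)
  (hrep : ∀ (x : SimplexProd S) (k : Fin K) (i : S k) (t : ℝ),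
      HasDerivAt (fun τ : ℝ => (φ τ x).1 k i)
        ((φ t x).1 k i * (fitness M k i (φ t x).1 -
          ∑ j : S k, (φ t x).1 k j * fitness M k j (φ t x).1)) t)

lemma coord_one_of_others_zero (z : SimplexProd S) (c : Fin K) (j0 : S c)
    (h : ∀ j, j ≠ j0 → z.1 c j = 0) : z.1 c j0 = 1 := by
  have hs := z.2.2 c
  rwa [Finset.sum_eq_single j0 (fun j _ hj => h j hj) (fun h => absurd (Finset.mem_univ j0) h)]
    at hs

include M hφ hrep

lemma zero_persists (x : SimplexProd S) (c : Fin K) (j : S c) (h0 : x.1 c j = 0) :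
    ∀ t : ℝ, 0 ≤ t → (φ t x).1 c j = 0 := by
  intro b hb
  set C : ℝ := 2 * ∑ s' : ∀ l, S l, |M c s'| with hCdef
  set f : ℝ → ℝ := fun τ => (φ τ x).1 c j with hf
  set g : ℝ → ℝ := fun τ => fitness M c j (φ τ x).1 -
      ∑ j' : S c, (φ τ x).1 c j' * fitness M c j' (φ τ x).1 with hg
  have hder : ∀ τ : ℝ, HasDerivAt f (f τ * g τ) τ := fun τ => hrep x c j τ
  have hcont : Continuous f := by
    rw [continuous_iff_continuousAt]
    exact fun τ => (hder τ).continuousAt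
  have key := norm_le_gronwallBound_of_norm_deriv_right_le (f := f)
    (f' := fun τ => f τ * g τ) (δ := 0) (K := C) (ε := 0) (a := 0) (b := b)
    (hcont.continuousOn)
    (fun τ _ => (hder τ).hasDerivWithinAt)
    (by simp [hf, hφ.map_zero, h0])
    (fun τ _ => by
      have hgb : |g τ| ≤ C := growth_abs_le M c j (φ τ x)
      have : ‖f τ * g τ‖ = |f τ| * |g τ| := abs_mul _ _
      rw [this, Real.norm_eq_abs, add_zero, mul_comm C]
      exact mul_le_mul_of_nonneg_left hgb (abs_nonneg _))
  have := key b ⟨hb, le_refl b⟩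
  rw [gronwallBound_ε0] at this
  simp only [zero_mul] at this
  have h := abs_nonneg (f b)
  rw [Real.norm_eq_abs] at this
  have : |f b| = 0 := le_antisymm this h
  exact abs_eq_zero.mp this

lemma vertex_fixed (s : ∀ j, S j) : ∀ t : ℝ, 0 ≤ t → φ t (vertex S s) = vertex S s := by
  intro t ht
  have hz : ∀ c (j : S c), j ≠ s c → (φ t (vertex S s)).1 c j = 0 := by
    intro c j hj
    exact zero_persists M φ hφ hrep (vertex S s) c j (by simp [vertex, hj]) t ht
  apply Subtype.ext
  funext c j
  by_cases hj : j = s c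
  · subst hj
    rw [coord_one_of_others_zero (φ t (vertex S s)) c (s c) (fun j' hj' => hz c j' hj')]
    simp [vertex]
  · rw [hz c j hj]
    simp [vertex, hj]

lemma vertex_chain_recurrent (s : ∀ j, S j) : vertex S s ∈ chainRecurrentSet φ := by
  have h : vertex S s ∈ forwardChainLimit φ (vertex S s) := by
    intro ε hε T hT
    refine chain_step φ (le_refl T) ?_
    rw [vertex_fixed M φ hφ hrep s T (le_of_lt hT)]
    simpa using hε
  exact ⟨h, h⟩

end Flow
section Edge
variable {K : ℕ} {S : Fin K → Type} [∀ k, Fintype (S k)] [∀ k, DecidableEq (S k)]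

/-- Point on the edge between the vertices of `s` and `t`. -/
def epoint (s t : ∀ j, S j) (μ : ℝ) : ∀ c, S c → ℝ := fun c j =>
  (1 - μ) * (if j = s c then 1 else 0) + μ * (if j = t c then 1 else 0)

def epointX (s t : ∀ j, S j) (μ : ℝ) (h0 : 0 ≤ μ) (h1 : μ ≤ 1) : SimplexProd S :=
  ⟨epoint s t μ, fun c j => by
      show 0 ≤ (1 - μ) * (if j = s c then (1:ℝ) else 0) + μ * (if j = t c then 1 else 0)
      split_ifs <;> nlinarith,
   fun c => by
      unfold epoint
      rw [Finset.sum_add_distrib, ← Finset.mul_sum, ← Finset.mul_sum,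
        Finset.sum_ite_eq' Finset.univ (s c) (fun _ => (1:ℝ)),
        Finset.sum_ite_eq' Finset.univ (t c) (fun _ => (1:ℝ))]
      simp⟩

lemma epointX_zero (s t : ∀ j, S j) : epointX s t 0 le_rfl zero_le_one = vertex S s := by
  apply Subtype.ext
  funext c j
  simp [epointX, epoint, vertex]

lemma epointX_one (s t : ∀ j, S j) : epointX s t 1 zero_le_one le_rfl = vertex S t := by
  apply Subtype.ext
  funext c j
  simp [epointX, epoint, vertex]

lemma epointX_dist (s t : ∀ j, S j) (μ ν : ℝ) (h0 : 0 ≤ μ) (h1 : μ ≤ 1)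
    (g0 : 0 ≤ ν) (g1 : ν ≤ 1) :
    dist (epointX s t μ h0 h1) (epointX s t ν g0 g1) ≤ |μ - ν| := by
  rw [Subtype.dist_eq]
  rw [dist_pi_le_iff (abs_nonneg _)]
  intro c
  rw [dist_pi_le_iff (abs_nonneg _)]
  intro j
  show dist (epoint s t μ c j) (epoint s t ν c j) ≤ |μ - ν|
  unfold epoint
  rw [Real.dist_eq]
  have habs : ∀ a b : ℝ, ((1-μ)*a + μ*b) - ((1-ν)*a + ν*b) = (μ - ν) * (b - a) := by
    intros; ring
  rw [habs, abs_mul]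
  have hba : |(if j = t c then (1:ℝ) else 0) - (if j = s c then 1 else 0)| ≤ 1 := by
    split_ifs <;> norm_num
  calc |μ - ν| * |(if j = t c then (1:ℝ) else 0) - (if j = s c then 1 else 0)|
      ≤ |μ - ν| * 1 := mul_le_mul_of_nonneg_left hba (abs_nonneg _)
    _ = |μ - ν| := mul_one _
end Edge
section EdgeFlow
variable {K : ℕ} {S : Fin K → Type} [∀ k, Fintype (S k)] [∀ k, DecidableEq (S k)]
  (M : ∀ k : Fin K, (∀ j, S j) → ℝ)
  (φ : ℝ → SimplexProd S → SimplexProd S) (hφ : IsFlow φ)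
  (hrep : ∀ (x : SimplexProd S) (k : Fin K) (i : S k) (t : ℝ),
      HasDerivAt (fun τ : ℝ => (φ τ x).1 k i)
        ((φ t x).1 k i * (fitness M k i (φ t x).1 -
          ∑ j : S k, (φ t x).1 k j * fitness M k j (φ t x).1)) t)
  {s t : ∀ j, S j} {k : Fin K} (hk : s k ≠ t k) (heq : ∀ l, l ≠ k → s l = t l)

omit [∀ k, Fintype (S k)] in
include heq in
lemma update_eq_t : Function.update s k (t k) = t := by
  funext l
  by_cases hl : l = k
  · subst hl; simp
  · rw [Function.update_of_ne hl, heq l hl]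

/-- Fitness of player k's strategies at a state where all other players play `s`. -/
lemma fitness_edge (i : S k) (z : SimplexProd S)
    (hzc : ∀ c, c ≠ k → ∀ j, z.1 c j = if j = s c then 1 else 0) :
    fitness M k i z.1 = M k (Function.update s k i) := by
  unfold fitness
  rw [Finset.sum_eq_single (Function.update s k i)]
  · rw [if_pos (Function.update_self k i s)]
    have hprod : ∏ c ∈ Finset.univ.erase k, z.1 c (Function.update s k i c) = 1 := by
      apply Finset.prod_eq_one
      intro c hc
      have hck : c ≠ k := (Finset.mem_erase.mp hc).1
      rw [Function.update_of_ne hck, hzc c hck, if_pos rfl]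
    rw [hprod, mul_one]
  · intro s' _ hs'
    by_cases h : s' k = i
    · rw [if_pos h]
      have : ∃ c, c ≠ k ∧ s' c ≠ s c := by
        by_contra hcon
        push_neg at hcon
        apply hs'
        funext l
        by_cases hl : l = k
        · subst hl; rw [Function.update_self]; exact h
        · rw [Function.update_of_ne hl]; exact hcon l hl
      obtain ⟨c, hck, hcs⟩ := this
      have : z.1 c (s' c) = 0 := by rw [hzc c hck, if_neg hcs]
      rw [Finset.prod_eq_zero (Finset.mem_erase.mpr ⟨hck, Finset.mem_univ c⟩) this, mul_zero]
    · rw [if_neg h]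
  · intro h
    exact absurd (Finset.mem_univ _) h

include M hφ hrep hk heq

/-- The flow starting on the edge remains on the edge. -/
lemma edge_invariant (μ : ℝ) (h0 : 0 ≤ μ) (h1 : μ ≤ 1) (τ : ℝ) (hτ : 0 ≤ τ) :
    φ τ (epointX s t μ h0 h1) =
      epointX s t ((φ τ (epointX s t μ h0 h1)).1 k (t k))
        ((φ τ (epointX s t μ h0 h1)).2.1 k (t k))
        (coord_le_one _ k (t k)) := by
  set x := epointX s t μ h0 h1 with hx
  set z := φ τ x with hzdef
  set m := z.1 k (t k) with hm
  have hz : ∀ c (j : S c), j ≠ s c → j ≠ t c → z.1 c j = 0 := by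
    intro c j hjs hjt
    refine zero_persists M φ hφ hrep x c j ?_ τ hτ
    show (1 - μ) * (if j = s c then (1:ℝ) else 0) + μ * (if j = t c then 1 else 0) = 0
    rw [if_neg hjs, if_neg hjt]; ring
  have hone : ∀ c, c ≠ k → z.1 c (s c) = 1 := by
    intro c hck
    refine coord_one_of_others_zero z c (s c) ?_
    intro j hj
    exact hz c j hj (by rw [← heq c hck]; exact hj)
  have hsk : z.1 k (s k) = 1 - m := by
    have hsum := z.2.2 k
    rw [← Finset.add_sum_erase _ _ (Finset.mem_univ (s k))] at hsum
    have herase : ∑ j ∈ Finset.univ.erase (s k), z.1 k j = m := by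
      rw [Finset.sum_eq_single (t k)]
      · intro b hb hbt
        exact hz k b (Finset.mem_erase.mp hb).1 hbt
      · intro hcon
        exact absurd (Finset.mem_erase.mpr ⟨Ne.symm hk, Finset.mem_univ _⟩) hcon
    rw [herase] at hsum
    linarith
  apply Subtype.ext
  funext c j
  show z.1 c j = (1 - m) * (if j = s c then (1:ℝ) else 0) + m * (if j = t c then 1 else 0)
  by_cases hck : c = k
  · subst hck
    by_cases hjs : j = s c
    · subst hjs
      rw [if_pos rfl, if_neg hk, hsk]; ring
    · by_cases hjt : j = t c
      · subst hjt
        rw [if_neg hjs, if_pos rfl, ← hm]; ring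
      · rw [hz c j hjs hjt, if_neg hjs, if_neg hjt]; ring
  · by_cases hjs : j = s c
    · subst hjs
      rw [if_pos rfl, if_pos (heq c hck), hone c hck]; ring
    · rw [hz c j hjs (by rw [← heq c hck]; exact hjs), if_neg hjs,
        if_neg (by rw [← heq c hck]; exact hjs)]; ring

end EdgeFlow
section EdgeFlow2
variable {K : ℕ} {S : Fin K → Type} [∀ k, Fintype (S k)] [∀ k, DecidableEq (S k)]
  (M : ∀ k : Fin K, (∀ j, S j) → ℝ)
  (φ : ℝ → SimplexProd S → SimplexProd S) (hφ : IsFlow φ)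
  (hrep : ∀ (x : SimplexProd S) (k : Fin K) (i : S k) (t : ℝ),
      HasDerivAt (fun τ : ℝ => (φ τ x).1 k i)
        ((φ t x).1 k i * (fitness M k i (φ t x).1 -
          ∑ j : S k, (φ t x).1 k j * fitness M k j (φ t x).1)) t)
  {s t : ∀ j, S j} {k : Fin K} (hk : s k ≠ t k) (heq : ∀ l, l ≠ k → s l = t l)
  (hM : M k s ≤ M k t)

include M hφ hrep hk heq hM

lemma edge_monotone (μ : ℝ) (h0 : 0 ≤ μ) (h1 : μ ≤ 1) :
    MonotoneOn (fun τ => (φ τ (epointX s t μ h0 h1)).1 k (t k)) (Set.Ici (0:ℝ)) := by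
  set x := epointX s t μ h0 h1 with hx
  set f : ℝ → ℝ := fun τ => (φ τ x).1 k (t k) with hf
  have hder : ∀ τ : ℝ, HasDerivAt f
      ((φ τ x).1 k (t k) * (fitness M k (t k) (φ τ x).1 -
        ∑ j : S k, (φ τ x).1 k j * fitness M k j (φ τ x).1)) τ := fun τ => hrep x k (t k) τ
  have hcont : Continuous f := by
    rw [continuous_iff_continuousAt]; exact fun τ => (hder τ).continuousAt
  refine monotoneOn_of_deriv_nonneg (convex_Ici 0) hcont.continuousOn
    (fun τ _ => (hder τ).differentiableAt.differentiableWithinAt) ?_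
  intro τ hτ
  rw [interior_Ici] at hτ
  have hτ0 : (0:ℝ) ≤ τ := le_of_lt hτ
  have hinv := edge_invariant M φ hφ hrep hk heq μ h0 h1 τ hτ0
  set ν := (φ τ x).1 k (t k) with hν
  have hν0 : 0 ≤ ν := (φ τ x).2.1 k (t k)
  have hν1 : ν ≤ 1 := coord_le_one _ k (t k)
  have hzc : ∀ c, c ≠ k → ∀ j, (φ τ x).1 c j = if j = s c then 1 else 0 := by
    intro c hck j
    rw [hinv]
    show (1 - ν) * (if j = s c then (1:ℝ) else 0) + ν * (if j = t c then 1 else 0)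
        = if j = s c then 1 else 0
    rw [← heq c hck]
    split_ifs <;> ring
  have hft : fitness M k (t k) (φ τ x).1 = M k t := by
    rw [fitness_edge M (t k) (φ τ x) hzc, update_eq_t heq]
  have hfs : fitness M k (s k) (φ τ x).1 = M k s := by
    rw [fitness_edge M (s k) (φ τ x) hzc, Function.update_eq_self]
  have hkj : ∀ j : S k, (φ τ x).1 k j =
      (1 - ν) * (if j = s k then 1 else 0) + ν * (if j = t k then 1 else 0) := by
    intro j
    rw [hinv]
    rfl
  have havg : ∑ j : S k, (φ τ x).1 k j * fitness M k j (φ τ x).1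
      = (1 - ν) * M k s + ν * M k t := by
    have hterm : ∀ j : S k, (φ τ x).1 k j * fitness M k j (φ τ x).1
        = (1 - ν) * (if j = s k then M k s else 0)
          + ν * (if j = t k then M k t else 0) := by
      intro j
      rw [hkj j]
      split_ifs with hjs hjt hjt
      · exact absurd (hjs.symm.trans hjt) hk
      · rw [hfs.symm, hjs]; ring
      · rw [hft.symm, hjt]; ring
      · ring
    rw [Finset.sum_congr rfl (fun j _ => hterm j), Finset.sum_add_distrib,
      ← Finset.mul_sum, ← Finset.mul_sum,
      Finset.sum_ite_eq' Finset.univ (s k) (fun _ => M k s),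
      Finset.sum_ite_eq' Finset.univ (t k) (fun _ => M k t)]
    simp
  rw [(hder τ).deriv, hft, havg, ← hν]
  have h2 : ν * (M k t - ((1 - ν) * M k s + ν * M k t))
      = ν * (1 - ν) * (M k t - M k s) := by ring
  rw [h2]
  exact mul_nonneg (mul_nonneg hν0 (sub_nonneg.mpr hν1)) (sub_nonneg.mpr hM)

lemma edge_m_zero (μ : ℝ) (h0 : 0 ≤ μ) (h1 : μ ≤ 1) :
    (φ 0 (epointX s t μ h0 h1)).1 k (t k) = μ := by
  rw [hφ.map_zero]
  show (1 - μ) * (if t k = s k then (1:ℝ) else 0) + μ * (if t k = t k then 1 else 0) = μ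
  rw [if_neg (Ne.symm hk), if_pos rfl]; ring

end EdgeFlow2
section Final
variable {K : ℕ} {S : Fin K → Type} [∀ k, Fintype (S k)] [∀ k, DecidableEq (S k)]
  (M : ∀ k : Fin K, (∀ j, S j) → ℝ)
  (φ : ℝ → SimplexProd S → SimplexProd S) (hφ : IsFlow φ)
  (hrep : ∀ (x : SimplexProd S) (k : Fin K) (i : S k) (t : ℝ),
      HasDerivAt (fun τ : ℝ => (φ τ x).1 k i)
        ((φ t x).1 k i * (fitness M k i (φ t x).1 -
          ∑ j : S k, (φ t x).1 k j * fitness M k j (φ t x).1)) t)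

include M hφ hrep

lemma edge_fcl {s t : ∀ j, S j} (hedge : RespEdge M s t) :
    vertex S t ∈ forwardChainLimit φ (vertex S s) := by
  obtain ⟨k, hk, heq, hM⟩ := hedge
  have heq' : ∀ l, l ≠ k → s l = t l := fun l hl => heq l hl
  intro ε hε T hT
  obtain ⟨n, hn⟩ : ∃ n : ℕ, 1 ≤ (n : ℝ) * (ε / 2) := by
    obtain ⟨n, hn⟩ := exists_nat_ge (2 / ε)
    refine ⟨n, ?_⟩
    rw [div_le_iff₀ hε] at hn
    linarith
  have main : ∀ n : ℕ, ∀ μ, ∀ (h0 : 0 ≤ μ) (h1 : μ ≤ 1), 1 - μ ≤ (n : ℝ) * (ε / 2) →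
      IsEpsTChain φ ε T (epointX s t μ h0 h1) (vertex S t) := by
    intro n
    induction n with
    | zero =>
      intro μ h0 h1 hle
      have hμ1 : μ = 1 := by
        simp only [Nat.cast_zero, zero_mul] at hle
        linarith
      subst hμ1
      rw [show epointX s t 1 h0 h1 = vertex S t from epointX_one s t]
      refine chain_step φ (le_refl T) ?_
      rw [vertex_fixed M φ hφ hrep t T hT.le]
      simpa using hε
    | succ n ih =>
      intro μ h0 h1 hle
      set x := epointX s t μ h0 h1 with hx
      set ν := (φ T x).1 k (t k) with hνdef
      have hν0 : 0 ≤ ν := (φ T x).2.1 k (t k)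
      have hν1 : ν ≤ 1 := coord_le_one _ k (t k)
      have hinv := edge_invariant M φ hφ hrep hk heq' μ h0 h1 T hT.le
      have hμν : μ ≤ ν := by
        have hm := edge_monotone M φ hφ hrep hk heq' hM μ h0 h1
          (Set.self_mem_Ici) (Set.mem_Ici.mpr hT.le) hT.le
        have hm' : (φ 0 (epointX s t μ h0 h1)).1 k (t k)
            ≤ (φ T (epointX s t μ h0 h1)).1 k (t k) := hm
        rwa [edge_m_zero M φ hφ hrep hk heq' hM μ h0 h1] at hm'
      by_cases hcase : 1 ≤ ν + ε / 2
      · refine chain_step φ (le_refl T) ?_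
        rw [hinv]
        have hd := epointX_dist s t ν 1 hν0 hν1 zero_le_one le_rfl
        rw [epointX_one] at hd
        calc dist (epointX s t ν hν0 hν1) (vertex S t) ≤ |ν - 1| := hd
          _ < ε := by
              rw [abs_of_nonpos (by linarith)]
              linarith
      · push_neg at hcase
        have hν'1 : ν + ε / 2 ≤ 1 := le_of_lt hcase
        have hν'0 : 0 ≤ ν + ε / 2 := by linarith
        refine chain_cons φ (le_refl T) ?_ (ih (ν + ε / 2) hν'0 hν'1 ?_)
        · rw [hinv]
          have hd := epointX_dist s t ν (ν + ε / 2) hν0 hν1 hν'0 hν'1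
          calc dist (epointX s t ν hν0 hν1) (epointX s t (ν + ε/2) hν'0 hν'1)
              ≤ |ν - (ν + ε / 2)| := hd
            _ < ε := by
                rw [show ν - (ν + ε / 2) = -(ε / 2) by ring, abs_neg,
                  abs_of_pos (by linarith)]
                linarith
        · push_cast at hle
          linarith
  have := main n 0 le_rfl zero_le_one (by simpa using hn)
  rwa [epointX_zero] at this

lemma step_in_A (A : Set (SimplexProd S)) (hA : IsSinkChainComponent φ A)
    {s t : ∀ j, S j} (hs : vertex S s ∈ A) (hedge : RespEdge M s t) :
    vertex S t ∈ A := by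
  obtain ⟨⟨x₀, hx₀R, hAeq⟩, hsink⟩ := hA
  have htR : vertex S t ∈ chainRecurrentSet φ := vertex_chain_recurrent M φ hφ hrep t
  set B : Set (SimplexProd S) := {y ∈ chainRecurrentSet φ | ChainEquiv φ (vertex S t) y}
    with hB
  have hBcc : IsChainComponent φ B := ⟨vertex S t, htR, rfl⟩
  have htB : vertex S t ∈ B := ⟨htR, htR⟩
  have hccle : ccLE φ B A :=
    ⟨vertex S s, hs, vertex S t, htB, edge_fcl M φ hφ hrep hedge⟩
  have hBA : B = A := by
    by_contra hne
    exact hsink B hBcc hne hccle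
  rw [← hBA]
  exact htB

end Final
theorem sink_chain_component_contains_MCC
    {K : ℕ} (hK : 1 ≤ K) (S : Fin K → Type)
    [∀ k, Fintype (S k)] [∀ k, DecidableEq (S k)] [∀ k, Nonempty (S k)]
    (M : ∀ k : Fin K, (∀ j, S j) → ℝ)
    (φ : ℝ → SimplexProd S → SimplexProd S) (hφ : IsFlow φ)
    (hrep : ∀ (x : SimplexProd S) (k : Fin K) (i : S k) (t : ℝ),
      HasDerivAt (fun τ : ℝ => (φ τ x).1 k i)
        ((φ t x).1 k i * (fitness M k i (φ t x).1 -
          ∑ j : S k, (φ t x).1 k j * fitness M k j (φ t x).1)) t)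
    (A : Set (SimplexProd S)) (hA : IsSinkChainComponent φ A)
    (si : ∀ j, S j) (hsi : vertex S si ∈ A) :
    (∀ sj : ∀ j, S j,
      Relation.ReflTransGen (RespEdge M) si sj → vertex S sj ∈ A) ∧
    ∃ B : Set (∀ j, S j), IsSinkSCC M B ∧ ∀ t ∈ B, vertex S t ∈ A := by
  have hreach : ∀ sj, Relation.ReflTransGen (RespEdge M) si sj → vertex S sj ∈ A := by
    intro sj h
    induction h with
    | refl => exact hsi
    | tail hab hbc ih => exact step_in_A M φ hφ hrep A hA ih hbc
  refine ⟨hreach, ?_⟩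
  obtain ⟨t0, hsit0, hsink, _⟩ := exists_sink_scc M si
  exact ⟨_, hsink, fun u hu => hreach u (hsit0.trans hu.1)⟩
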